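/- arXiv:2205.09901 — 5 statements merged into one kernel-verified Lean document; each statement's English description precedes it below -/
import Mathlib

section
/- Integrated gradients satisfies symmetry: let f : ℝⁿ → ℝ be continuously differentiable and symmetric in coordinates i and j (swapping the i-th and j-th arguments leaves f unchanged for every input). Then for all x, x' with x_i = x_j and x'_i = x'_j, the integrated-gradients contributions of coordinates i and j coincide: C_i^f(x,x') = C_j^f(x,x'). -/
lemma fderiv_swap_eq {n : ℕ} (f : (Fin n → ℝ) → ℝ) (hf : ContDiff ℝ 1 f) (i j : Fin n)
    (hsym : ∀ v : Fin n → ℝ, f (v ∘ Equiv.swap i j) = f v)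
    (v : Fin n → ℝ) (hv : v i = v j) :
    fderiv ℝ f v (Pi.single i 1) = fderiv ℝ f v (Pi.single j 1) := by
  set S : (Fin n → ℝ) →L[ℝ] (Fin n → ℝ) :=
    ContinuousLinearMap.pi fun k => ContinuousLinearMap.proj (Equiv.swap i j k) with hS
  have hSapp : ∀ w : Fin n → ℝ, S w = w ∘ Equiv.swap i j := fun w => rfl
  have hSv : S v = v := by
    funext k
    rw [hSapp]
    simp only [Function.comp_apply]
    rcases eq_or_ne k i with rfl | hki
    · rw [Equiv.swap_apply_left, hv]
    rcases eq_or_ne k j with rfl | hkj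
    · rw [Equiv.swap_apply_right, hv]
    · rw [Equiv.swap_apply_of_ne_of_ne hki hkj]
  have hfS : f ∘ S = f := by
    funext w; simp [hSapp, hsym]
  have hder : fderiv ℝ f v = (fderiv ℝ f (S v)).comp S := by
    have h := fderiv_comp v ((hf.differentiable one_ne_zero) (S v)) S.differentiableAt
    rw [S.fderiv, hfS] at h
    exact h
  have hSi : S (Pi.single i 1) = Pi.single j 1 := by
    funext k
    rw [hSapp]
    simp only [Function.comp_apply]
    rcases eq_or_ne k j with rfl | hkj
    · rw [Equiv.swap_apply_right, Pi.single_eq_same, Pi.single_eq_same]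
    rcases eq_or_ne k i with rfl | hki
    · rw [Equiv.swap_apply_left, Pi.single_eq_of_ne (Ne.symm hkj), Pi.single_eq_of_ne hkj]
    · rw [Equiv.swap_apply_of_ne_of_ne hki hkj, Pi.single_eq_of_ne hki,
        Pi.single_eq_of_ne hkj]
  conv_lhs => rw [hder]
  simp only [ContinuousLinearMap.comp_apply, hSi, hSv]

/-- symmetry axiom of integrated gradients. If `f` is symmetric in
coordinates `i` and `j`, and `x i = x j`, `x' i = x' j`, then the contributions
of coordinates `i` and `j` coincide. -/
theorem integrated_gradients_symmetry {n : ℕ}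
    (f : (Fin n → ℝ) → ℝ) (hf : ContDiff ℝ 1 f) (i j : Fin n)
    (hsym : ∀ v : Fin n → ℝ, f (v ∘ Equiv.swap i j) = f v)
    (x x' : Fin n → ℝ) (hx : x i = x j) (hx' : x' i = x' j) :
    (x i - x' i) *
        ∫ τ in (0:ℝ)..1, fderiv ℝ f (x' + τ • (x - x')) (Pi.single i 1)
      = (x j - x' j) *
        ∫ τ in (0:ℝ)..1, fderiv ℝ f (x' + τ • (x - x')) (Pi.single j 1) := by
  have hint : ∀ τ : ℝ, fderiv ℝ f (x' + τ • (x - x')) (Pi.single i 1)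
      = fderiv ℝ f (x' + τ • (x - x')) (Pi.single j 1) := by
    intro τ
    apply fderiv_swap_eq f hf i j hsym
    simp [hx, hx']
  rw [hx, hx']
  congr 1
  exact intervalIntegral.integral_congr fun τ _ => hint τ
end

section
/- Under the hypotheses of the gradient-factorization identity (∂f/∂x_i (x) = B_i Σ_m A_m g_m(x) with A_m ≥ 0 and g_m ≥ 0 everywhere), for all x, x' and indices i, j: if B_i(x'_i − x_i) ≤ B_j(x'_j − x_j) then f(x^{{i}|x'}) ≤ f(x^{{j}|x'}). -/
/-- under the gradient-factorization hypothesis, the ordering of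
the quantities `B_k (x'_k − x_k)` determines the ordering of the effects of
single-coordinate substitutions on `f`. -/
theorem gradient_factorization_substitution_order {n M : ℕ}
    (f : (Fin n → ℝ) → ℝ) (hf : ContDiff ℝ 1 f)
    (A : Fin M → ℝ) (hA : ∀ m, 0 ≤ A m)
    (B : Fin n → ℝ)
    (g : Fin M → (Fin n → ℝ) → ℝ) (hg : ∀ m v, 0 ≤ g m v)
    (hgrad : ∀ (i : Fin n) (x : Fin n → ℝ),
      fderiv ℝ f x (Pi.single i 1) = B i * ∑ m, A m * g m x)
    (x x' : Fin n → ℝ) (i j : Fin n)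
    (hle : B i * (x' i - x i) ≤ B j * (x' j - x j)) :
    f (Function.update x i (x' i)) ≤ f (Function.update x j (x' j)) := by
  by_cases hij : i = j
  · subst hij; exact le_refl _
  have hdf : Differentiable ℝ f := hf.differentiable one_ne_zero
  set a := Function.update x i (x' i) with ha
  set b := Function.update x j (x' j) with hb
  have hG : ∀ y : Fin n → ℝ, 0 ≤ ∑ m, A m * g m y := fun y =>
    Finset.sum_nonneg fun m _ => mul_nonneg (hA m) (hg m y)
  -- directional derivative formula
  have key : ∀ (y v : Fin n → ℝ),
      fderiv ℝ f y v = (∑ k, v k * B k) * ∑ m, A m * g m y := by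
    intro y v
    have hv : v = ∑ k, v k • (Pi.single k (1 : ℝ) : Fin n → ℝ) := by
      ext l
      simp [Pi.single_apply, Finset.sum_ite_eq', mul_comm]
    conv_lhs => rw [hv]
    rw [map_sum]
    simp only [map_smul, smul_eq_mul, hgrad]
    rw [Finset.sum_mul]
    exact Finset.sum_congr rfl fun k _ => by ring
  -- the direction
  set c : Fin n → ℝ := b - a with hc
  have hsum : ∑ k, c k * B k = B j * (x' j - x j) - B i * (x' i - x i) := by
    have hterm : ∀ k, c k * B k =
        (if k = j then B j * (x' j - x j) else 0)
          - (if k = i then B i * (x' i - x i) else 0) := by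
      intro k
      by_cases h1 : k = j
      · subst h1
        have h2 : k ≠ i := fun h => hij (h ▸ rfl)
        simp [hc, hb, ha, Pi.sub_apply, Function.update_apply, h2, hij]
        ring
      · by_cases h2 : k = i
        · subst h2
          simp [hc, hb, ha, Pi.sub_apply, Function.update_apply, h1,
            fun h => h1 (h : k = j)]
          ring
        · simp [hc, hb, ha, Pi.sub_apply, Function.update_apply, h1, h2]
    rw [Finset.sum_congr rfl fun k _ => hterm k, Finset.sum_sub_distrib,
      Finset.sum_ite_eq' Finset.univ j, Finset.sum_ite_eq' Finset.univ i]
    simp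
  have hsum_nonneg : 0 ≤ ∑ k, c k * B k := by
    rw [hsum]; linarith
  -- the path
  set γ : ℝ → (Fin n → ℝ) := fun t => a + t • c with hγ
  have hγd : ∀ t : ℝ, HasDerivAt γ c t := by
    intro t
    have h1 : HasDerivAt (fun t : ℝ => t • c) ((1 : ℝ) • c) t :=
      (hasDerivAt_id t).smul_const c
    have h2 := h1.const_add a
    rw [one_smul] at h2
    exact h2
  have hhd : ∀ t : ℝ, HasDerivAt (fun t => f (γ t)) (fderiv ℝ f (γ t) c) t := by
    intro t
    exact (hdf (γ t)).hasFDerivAt.comp_hasDerivAt t (hγd t)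
  have hmono : Monotone (fun t => f (γ t)) := by
    apply monotone_of_deriv_nonneg
    · exact fun t => (hhd t).differentiableAt
    · intro t
      rw [(hhd t).deriv, key]
      exact mul_nonneg hsum_nonneg (hG _)
  have h0 : γ 0 = a := by simp [hγ]
  have h1 : γ 1 = b := by simp [hγ, hc]
  have := hmono (by norm_num : (0:ℝ) ≤ 1)
  simpa only [h0, h1] using this
end

section
/- Let Δ ⊆ ℝⁿ be bounded by l, u ∈ Δ (l ≤ x ≤ u componentwise for all x ∈ Δ), and let N : Δ → {0,1} be monotone (x ≤ x' componentwise implies N(x) ≤ N(x')). Let e ∈ Δ with N(e) = 1 and S ⊆ {1,…,n}. Then S is an abductive explanation for e (i.e., N(e^{S̄|z}) = N(e) for all z ∈ Δ, where S̄ is the complement of S and e^{S̄|z} replaces the coordinates outside S by those of z) if and only if N(e^{S̄|l}) = 1. -/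
/-- `substOn x S y` is `x^{S|y}`: the vector `x` with the coordinates in `S`
replaced by those of `y`. -/
def substOn {n : ℕ} (x : Fin n → ℝ) (S : Finset (Fin n)) (y : Fin n → ℝ) :
    Fin n → ℝ :=
  fun i => if i ∈ S then y i else x i

/-- for a monotone classifier on a bounded domain closed under
substitution, with `N e = 1`, a subset `S` is an abductive explanation for `e`
iff substituting the lower bound on the complement of `S` still yields `1`. -/
theorem abductive_iff_lower_bound {n : ℕ}
    (Δ : Set (Fin n → ℝ)) (l u : Fin n → ℝ) (hl : l ∈ Δ) (hu : u ∈ Δ)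
    (hbound : ∀ x ∈ Δ, ∀ i, l i ≤ x i ∧ x i ≤ u i)
    (hclosed : ∀ x ∈ Δ, ∀ y ∈ Δ, ∀ S : Finset (Fin n), substOn x S y ∈ Δ)
    (N : (Fin n → ℝ) → ℕ)
    (hN01 : ∀ x ∈ Δ, N x = 0 ∨ N x = 1)
    (hNmono : ∀ x ∈ Δ, ∀ x' ∈ Δ, (∀ i, x i ≤ x' i) → N x ≤ N x')
    (e : Fin n → ℝ) (he : e ∈ Δ) (hNe : N e = 1) (S : Finset (Fin n)) :
    (∀ z ∈ Δ, N (substOn e Sᶜ z) = N e) ↔ N (substOn e Sᶜ l) = 1 := by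
  constructor
  · intro h
    rw [h l hl, hNe]
  · intro h z hz
    rw [hNe]
    have hmemz : substOn e Sᶜ z ∈ Δ := hclosed e he z hz _
    have hmeml : substOn e Sᶜ l ∈ Δ := hclosed e he l hl _
    have hle : N (substOn e Sᶜ l) ≤ N (substOn e Sᶜ z) := by
      apply hNmono _ hmeml _ hmemz
      intro i
      simp only [substOn]
      split
      · exact (hbound z hz i).1
      · exact le_refl _
    rcases hN01 _ hmemz with h0 | h1
    · omega
    · exact h1
end

section
/- Let Δ ⊆ ℝⁿ be bounded by l, u ∈ Δ and let N : Δ → {0,1} be monotone. Let x ∈ Δ with N(x) = 0 and S ⊆ {1,…,n}. Then S is a contrastive explanation for x (there exists y ∈ Δ with N(x^{S|y}) ≠ N(x)) if and only if N(x^{S|u}) = 1. -/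
/-- for a monotone classifier on a bounded domain closed under
substitution, with `N x = 0`, a subset `S` is a contrastive explanation for `x`
iff substituting the upper bound on `S` yields `1`. -/
theorem contrastive_iff_upper_bound {n : ℕ}
    (Δ : Set (Fin n → ℝ)) (l u : Fin n → ℝ) (hl : l ∈ Δ) (hu : u ∈ Δ)
    (hbound : ∀ x ∈ Δ, ∀ i, l i ≤ x i ∧ x i ≤ u i)
    (hclosed : ∀ x ∈ Δ, ∀ y ∈ Δ, ∀ S : Finset (Fin n), substOn x S y ∈ Δ)
    (N : (Fin n → ℝ) → ℕ)
    (hN01 : ∀ x ∈ Δ, N x = 0 ∨ N x = 1)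
    (hNmono : ∀ x ∈ Δ, ∀ x' ∈ Δ, (∀ i, x i ≤ x' i) → N x ≤ N x')
    (x : Fin n → ℝ) (hx : x ∈ Δ) (hNx : N x = 0) (S : Finset (Fin n)) :
    (∃ y ∈ Δ, N (substOn x S y) ≠ N x) ↔ N (substOn x S u) = 1 := by
  have hxu : substOn x S u ∈ Δ := hclosed x hx u hu S
  constructor
  · rintro ⟨y, hy, hne⟩
    have hxy : substOn x S y ∈ Δ := hclosed x hx y hy S
    have h1 : N (substOn x S y) = 1 := by
      rcases hN01 _ hxy with h | h
      · exact absurd (h.trans hNx.symm) hne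
      · exact h
    have hle : N (substOn x S y) ≤ N (substOn x S u) := by
      apply hNmono _ hxy _ hxu
      intro i
      simp only [substOn]
      split
      · exact (hbound y hy i).2
      · exact le_refl _
    rcases hN01 _ hxu with h | h
    · omega
    · exact h
  · intro h
    exact ⟨u, hu, by rw [h, hNx]; omega⟩
end

section
/- Let E₁,…,E_m be subsets of {1,…,n} with ⋃ᵢ Eᵢ = {1,…,n}. Define N : {0,1}^m → {0,1} by N(y) = 1 iff for every j ∈ {1,…,n} there exists i with j ∈ Eᵢ and yᵢ = 1. Then for the all-zeros input x = 0 and any S ⊆ {1,…,m}: there exists y ∈ {0,1}^m with N(x^{S|y}) ≠ N(x) if and only if ⋃_{i∈S} Eᵢ = {1,…,n}. -/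
open Classical in
/-- The function computed by the 2-layer step-function network in the
SET-COVER reduction: `setCoverNet E y = 1` iff every `j` lies in some `Eᵢ`
with `yᵢ = true`. -/
noncomputable def setCoverNet {m n : ℕ} (E : Fin m → Finset (Fin n))
    (y : Fin m → Bool) : ℕ :=
  if ∀ j : Fin n, ∃ i : Fin m, j ∈ E i ∧ y i = true then 1 else 0

/-- correctness of the SET-COVER reduction for MCR. For the
all-zeros input, a subset `S` of the input coordinates admits a substitution
changing the prediction iff `{Eᵢ : i ∈ S}` is a set cover. -/
theorem set_cover_reduction_mcr {m n : ℕ} (hn : 0 < n)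
    (E : Fin m → Finset (Fin n))
    (hcover : ∀ j : Fin n, ∃ i : Fin m, j ∈ E i)
    (S : Finset (Fin m)) :
    (∃ y : Fin m → Bool,
        setCoverNet E (fun i => if i ∈ S then y i else false)
          ≠ setCoverNet E (fun _ => false))
      ↔ ∀ j : Fin n, ∃ i ∈ S, j ∈ E i := by
  have hzero : setCoverNet E (fun _ => false) = 0 := by
    unfold setCoverNet
    rw [if_neg]
    intro h
    obtain ⟨i, _, hi⟩ := h ⟨0, hn⟩
    simp at hi
  constructor
  · rintro ⟨y, hy⟩
    rw [hzero] at hy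
    unfold setCoverNet at hy
    by_cases h : ∀ j : Fin n, ∃ i : Fin m, j ∈ E i ∧ (if i ∈ S then y i else false) = true
    · intro j
      obtain ⟨i, hij, hi⟩ := h j
      by_cases hiS : i ∈ S
      · exact ⟨i, hiS, hij⟩
      · simp [hiS] at hi
    · simp [h] at hy
      intro j
      obtain ⟨i, h1, h2, _⟩ := hy j
      exact ⟨i, h2, h1⟩
  · intro h
    refine ⟨fun _ => true, ?_⟩
    rw [hzero]
    unfold setCoverNet
    rw [if_pos]
    · simp
    · intro j
      obtain ⟨i, hiS, hij⟩ := h j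
      exact ⟨i, hij, by simp [hiS]⟩
end
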